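/- For the binomial family f(x;μ) = C(n,x) (μ/n)ˣ (1-μ/n)^{n-x} with mean parameter μ ∈ (0,n), the k-th derivative with respect to μ satisfies f⁽ᵏ⁾(x;μ) = f(x;μ)·pₖ(x;μ) where pₖ is a polynomial of exact degree k in x; consequently ∫ xⁱ f⁽ᵏ⁾(x;μ) dν(x) = 0 for all integers 0 ≤ i < k. -/

import Mathlib

open Polynomial Finset

private lemma iteratedDeriv_polyeval' (k : ℕ) : ∀ (P : ℝ[X]),
    iteratedDeriv k (fun m => P.eval m) = fun m => (derivative^[k] P).eval m := by
  induction k with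
  | zero => intro P; simp
  | succ k ih =>
    intro P
    rw [iteratedDeriv_succ', Function.iterate_succ_apply]
    have : deriv (fun m => P.eval m) = fun m => (derivative P).eval m := by
      funext m; exact Polynomial.deriv P
    rw [this, ih]

private lemma iterate_derivative_sub_pow' (c : ℝ) (b k : ℕ) :
    derivative^[k] ((C c - X)^b) =
      (-1)^k * C (b.descFactorial k : ℝ) * (C c - X)^(b - k) := by
  induction k with
  | zero => simp
  | succ k ih =>
    rw [Function.iterate_succ_apply', ih]
    have hd : derivative ((C c - X)^(b-k)) =
        C ((b-k : ℕ) : ℝ) * (C c - X)^(b - k - 1) * (-1) := by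
      rw [derivative_pow]
      simp [mul_comm]
    rw [derivative_mul, derivative_mul, hd]
    have h1 : derivative ((-1 : ℝ[X])^k) = 0 := by
      rw [← C_1, ← C_neg, ← C_pow, derivative_C]
    rw [h1, derivative_C]
    have h2 : b.descFactorial (k+1) = (b - k) * b.descFactorial k := Nat.descFactorial_succ b k
    have h3 : b - (k+1) = b - k - 1 := rfl
    rw [h2, h3, Nat.cast_mul, C_mul]
    ring

private lemma descFac_choose' (n j y : ℕ) (h : j + y ≤ n) :
    ((j+y).descFactorial j) * (n.choose (j+y)) = (n.descFactorial j) * ((n-j).choose y) := by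
  have h1 := Nat.choose_mul (n := n) (k := j + y) (s := j) (Nat.le_add_right j y)
  rw [Nat.descFactorial_eq_factorial_mul_choose, Nat.descFactorial_eq_factorial_mul_choose]
  have h2 : j + y - j = y := by omega
  rw [h2] at h1
  calc Nat.factorial j * (j+y).choose j * n.choose (j+y)
      = Nat.factorial j * (n.choose (j+y) * (j+y).choose j) := by ring
    _ = Nat.factorial j * (n.choose j * (n-j).choose y) := by rw [h1]
    _ = Nat.factorial j * n.choose j * (n - j).choose y := by ring

private lemma binom_moment' (n j : ℕ) (hj : j ≤ n) (t : ℝ) :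
    ∑ x ∈ range (n+1), (x.descFactorial j : ℝ) * (n.choose x : ℝ) * t^x * (1-t)^(n-x)
      = (n.descFactorial j : ℝ) * t^j := by
  set g : ℕ → ℝ := fun x => (x.descFactorial j : ℝ) * (n.choose x : ℝ) * t^x * (1-t)^(n-x) with hg
  have h1 : ∑ x ∈ range (n+1), g x = ∑ x ∈ Ico j (n+1), g x := by
    rw [range_eq_Ico, ← Finset.sum_Ico_consecutive _ (Nat.zero_le j) (by omega)]
    have hz : ∑ x ∈ Ico 0 j, g x = 0 := by
      apply Finset.sum_eq_zero
      intro x hx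
      simp only [Finset.mem_Ico] at hx
      simp [hg, Nat.descFactorial_eq_zero_iff_lt.mpr hx.2]
    rw [hz, zero_add]
  rw [h1, Finset.sum_Ico_eq_sum_range]
  have h2 : n + 1 - j = (n - j) + 1 := by omega
  rw [h2]
  have h3 : ∀ y ∈ range ((n-j)+1), g (j + y)
      = ((n.descFactorial j : ℝ) * t^j) * (((n-j).choose y : ℝ) * t^y * (1-t)^((n-j)-y)) := by
    intro y hy
    simp only [Finset.mem_range] at hy
    have hyn : j + y ≤ n := by omega
    have hc := descFac_choose' n j y hyn
    have hcR : ((j+y).descFactorial j : ℝ) * (n.choose (j+y) : ℝ)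
        = (n.descFactorial j : ℝ) * ((n-j).choose y : ℝ) := by exact_mod_cast congrArg (Nat.cast : ℕ → ℝ) hc
    have he : n - (j + y) = (n - j) - y := by omega
    simp only [hg, he, pow_add]
    calc (((j+y).descFactorial j : ℝ)) * (n.choose (j+y) : ℝ) * (t^j * t^y) * (1-t)^((n-j)-y)
        = ((j+y).descFactorial j : ℝ) * (n.choose (j+y) : ℝ) * (t^j * t^y) * (1-t)^((n-j)-y) := rfl
      _ = (n.descFactorial j : ℝ) * ((n-j).choose y : ℝ) * (t^j * t^y) * (1-t)^((n-j)-y) := by rw [hcR]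
      _ = (n.descFactorial j : ℝ) * t^j * (((n-j).choose y : ℝ) * t^y * (1-t)^((n-j)-y)) := by ring
  rw [Finset.sum_congr rfl h3, ← Finset.mul_sum]
  have h4 : ∑ y ∈ range ((n-j)+1), ((n-j).choose y : ℝ) * t^y * (1-t)^((n-j)-y) = 1 := by
    have hb := add_pow t (1-t) (n-j)
    have ht : t + (1 - t) = 1 := by ring
    rw [ht, one_pow] at hb
    rw [Finset.sum_congr rfl (fun y _ => by ring :
      ∀ y ∈ range ((n-j)+1), ((n-j).choose y : ℝ) * t^y * (1-t)^((n-j)-y)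
        = t^y * (1-t)^((n-j)-y) * ((n-j).choose y : ℝ)), ← hb]
  rw [h4, mul_one]

private lemma pow_descFac_helper (u : ℝ) (hu : u ≠ 0) (a d : ℕ) :
    (a.descFactorial d : ℝ) * u^(a-d) = (a.descFactorial d : ℝ) * (u^a * (u^d)⁻¹) := by
  by_cases h : d ≤ a
  · rw [pow_sub₀ u hu h]
  · rw [Nat.descFactorial_eq_zero_iff_lt.mpr (by omega)]
    simp

/-- The binomial pmf in mean parametrization, as a polynomial in the mean. -/
noncomputable def binomP (n x : ℕ) : Polynomial ℝ :=
  C ((n.choose x : ℝ)/(n:ℝ)^n) * (X^x * (C (n:ℝ) - X)^(n-x))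

private lemma binomP_eval (n : ℕ) (hn : 0 < n) (x : ℕ) (hx : x ≤ n) (m : ℝ) :
    (binomP n x).eval m = (n.choose x : ℝ) * (m / n)^x * (1 - m / n)^(n - x) := by
  have hn' : (n:ℝ) ≠ 0 := Nat.cast_ne_zero.mpr hn.ne'
  have h1 : 1 - m/n = ((n:ℝ) - m)/n := by field_simp
  have hpow : (n:ℝ)^n = (n:ℝ)^x * (n:ℝ)^(n-x) := by rw [← pow_add]; congr 1; omega
  simp only [binomP, eval_mul, eval_C, eval_pow, eval_X, eval_sub]
  rw [h1, div_pow, div_pow, hpow]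
  field_simp

private lemma sum_dP_binomP (n : ℕ) (hn : 0 < n) (j : ℕ) (hj : j ≤ n) :
    ∑ x ∈ range (n+1), C ((descPochhammer ℝ j).eval (x:ℝ)) * binomP n x
      = C ((n.descFactorial j : ℝ)/(n:ℝ)^j) * X^j := by
  have hn' : (n:ℝ) ≠ 0 := Nat.cast_ne_zero.mpr hn.ne'
  apply Polynomial.funext
  intro t
  rw [eval_finset_sum]
  have hterm : ∀ x ∈ range (n+1),
      (C ((descPochhammer ℝ j).eval (x:ℝ)) * binomP n x).eval t
      = (x.descFactorial j : ℝ) * (n.choose x : ℝ) * (t/n)^x * (1-t/n)^(n-x) := by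
    intro x hx
    simp only [Finset.mem_range] at hx
    rw [eval_mul, eval_C, binomP_eval n hn x (by omega) t,
      descPochhammer_eval_eq_descFactorial]
    ring
  rw [Finset.sum_congr rfl hterm, binom_moment' n j hj (t/n)]
  rw [eval_mul, eval_C, eval_pow, eval_X, div_pow]
  ring

private lemma deg_claim (n : ℕ) (hn : 0 < n) :
    ∀ i, i ≤ n → ∀ r : ℝ[X], r.natDegree ≤ i →
      (∑ x ∈ range (n+1), C (r.eval (x:ℝ)) * binomP n x).natDegree ≤ i := by
  intro i
  induction i with
  | zero =>
    intro _ r hr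
    have hrc : r = C (r.coeff 0) := eq_C_of_natDegree_le_zero hr
    have h0 : ∑ x ∈ range (n+1), C (r.eval (x:ℝ)) * binomP n x
        = C (r.coeff 0) * ∑ x ∈ range (n+1), C ((descPochhammer ℝ 0).eval (x:ℝ)) * binomP n x := by
      rw [Finset.mul_sum]
      refine Finset.sum_congr rfl fun x _ => ?_
      rw [hrc]
      simp [mul_assoc, ← C_mul]
    rw [h0, sum_dP_binomP n hn 0 (Nat.zero_le n)]
    simp
  | succ i ih =>
    intro hsn r hr
    set c := r.coeff (i+1) with hc
    set r' := r - C c * descPochhammer ℝ (i+1) with hr'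
    have hdp_deg : (descPochhammer ℝ (i+1)).natDegree = i+1 := descPochhammer_natDegree (R := ℝ) (i+1)
    have hmonic := monic_descPochhammer ℝ (i+1)
    have hr'deg : r'.natDegree ≤ i := by
      rw [natDegree_le_iff_coeff_eq_zero]
      intro N hN
      have hN1 : i + 1 ≤ N := hN
      rcases eq_or_lt_of_le hN1 with h | h
      · rw [hr', coeff_sub, coeff_C_mul, ← h]
        have : (descPochhammer ℝ (i+1)).coeff (i+1) = 1 := by
          have := hmonic.coeff_natDegree
          rwa [hdp_deg] at this
        rw [this, mul_one, ← hc]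
        ring
      · rw [hr', coeff_sub, coeff_C_mul,
          coeff_eq_zero_of_natDegree_lt (lt_of_le_of_lt hr h),
          coeff_eq_zero_of_natDegree_lt (by rw [hdp_deg]; exact h)]
        ring
    have hsplit : ∑ x ∈ range (n+1), C (r.eval (x:ℝ)) * binomP n x
        = C c * (∑ x ∈ range (n+1), C ((descPochhammer ℝ (i+1)).eval (x:ℝ)) * binomP n x)
          + ∑ x ∈ range (n+1), C (r'.eval (x:ℝ)) * binomP n x := by
      rw [Finset.mul_sum, ← Finset.sum_add_distrib]
      refine Finset.sum_congr rfl fun x _ => ?_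
      have : r.eval (x:ℝ) = c * (descPochhammer ℝ (i+1)).eval (x:ℝ) + r'.eval (x:ℝ) := by
        simp only [hr', eval_sub, eval_mul, eval_C]
        ring
      rw [this, map_add, map_mul]
      ring
    rw [hsplit, sum_dP_binomP n hn (i+1) hsn]
    refine le_trans (natDegree_add_le _ _) (max_le ?_ ?_)
    · rw [← mul_assoc, ← C_mul]
      exact natDegree_C_mul_X_pow_le _ _
    · exact le_trans (ih (by omega) r' hr'deg) (by omega)

private lemma comp_deg_lc (c : ℝ) (j m : ℕ) :
    (descPochhammer ℝ m * (descPochhammer ℝ j).comp (C c - X)).natDegree = m + j ∧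
    (descPochhammer ℝ m * (descPochhammer ℝ j).comp (C c - X)).leadingCoeff = (-1)^j := by
  have hq : (C c - X) = -(X - C c) := by ring
  have hqdeg : (C c - X).natDegree = 1 := by rw [hq, natDegree_neg]; exact natDegree_X_sub_C c
  have hqlc : (C c - X).leadingCoeff = -1 := by
    rw [hq, leadingCoeff_neg, (monic_X_sub_C c).leadingCoeff]
  have hcomp_deg : ((descPochhammer ℝ j).comp (C c - X)).natDegree = j := by
    rw [natDegree_comp, hqdeg, descPochhammer_natDegree, mul_one]
  have hcomp_lc : ((descPochhammer ℝ j).comp (C c - X)).leadingCoeff = (-1)^j := by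
    rw [leadingCoeff_comp (by rw [hqdeg]; exact one_ne_zero), hqlc,
      (monic_descPochhammer ℝ j).leadingCoeff, descPochhammer_natDegree, one_mul]
  have hcomp_ne : (descPochhammer ℝ j).comp (C c - X) ≠ 0 := by
    intro h
    rw [h, leadingCoeff_zero] at hcomp_lc
    exact (by positivity : ((-1:ℝ)^j)^2 > 0).ne' (by rw [← hcomp_lc]; ring)
  constructor
  · rw [natDegree_mul (monic_descPochhammer ℝ m).ne_zero hcomp_ne,
      descPochhammer_natDegree, hcomp_deg]
  · rw [leadingCoeff_mul, (monic_descPochhammer ℝ m).leadingCoeff, hcomp_lc, one_mul]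

theorem binomial_derivatives_orthogonal_polynomials
    (n : ℕ) (hn : 0 < n) (μ : ℝ) (hμ : μ ∈ Set.Ioo (0 : ℝ) n)
    (f : ℕ → ℝ → ℝ)
    (hf : ∀ (x : ℕ) (m : ℝ),
      f x m = (n.choose x : ℝ) * (m / n)^x * (1 - m / n)^(n - x)) :
    ∀ k : ℕ, k ≤ n →
      (∃ p : Polynomial ℝ, p.degree = (k : ℕ) ∧
        ∀ x : ℕ, x ≤ n →
          iteratedDeriv k (fun m => f x m) μ = f x μ * p.eval (x : ℝ)) ∧
      (∀ i : ℕ, i < k →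
        ∑ x ∈ Finset.range (n + 1),
          (x : ℝ)^i * iteratedDeriv k (fun m => f x m) μ = 0) := by
  obtain ⟨hμ0, hμn⟩ := hμ
  have hμne : μ ≠ 0 := hμ0.ne'
  have hnμ : (0:ℝ) < (n:ℝ) - μ := by linarith
  have hnμne : (n:ℝ) - μ ≠ 0 := hnμ.ne'
  have hfP : ∀ x, x ≤ n → (fun m => f x m) = fun m => (binomP n x).eval m := by
    intro x hx
    funext m
    rw [hf, binomP_eval n hn x hx]
  intro k hk
  have hIter : ∀ x, x ≤ n →
      iteratedDeriv k (fun m => f x m) μ = (derivative^[k] (binomP n x)).eval μ := by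
    intro x hx
    rw [hfP x hx, iteratedDeriv_polyeval']
  constructor
  · -- part 1
    set p : ℝ[X] := ∑ j ∈ range (k+1),
      C ((k.choose j : ℝ) * (-1)^j / (μ^(k-j) * ((n:ℝ)-μ)^j)) *
        (descPochhammer ℝ (k-j) * (descPochhammer ℝ j).comp (C (n:ℝ) - X)) with hp
    have hQdeg : ∀ j, j ≤ k →
        (descPochhammer ℝ (k-j) * (descPochhammer ℝ j).comp (C (n:ℝ) - X)).natDegree = k := by
      intro j hj
      rw [(comp_deg_lc (n:ℝ) j (k-j)).1]
      omega
    have hcoeff : p.coeff k = ∑ j ∈ range (k+1), (k.choose j : ℝ) / (μ^(k-j) * ((n:ℝ)-μ)^j) := by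
      rw [hp, finset_sum_coeff]
      refine Finset.sum_congr rfl fun j hj => ?_
      simp only [Finset.mem_range] at hj
      have hjk : j ≤ k := by omega
      rw [coeff_C_mul]
      have hQc : (descPochhammer ℝ (k-j) * (descPochhammer ℝ j).comp (C (n:ℝ) - X)).coeff k
          = (-1)^j := by
        have hcn := coeff_natDegree
          (p := descPochhammer ℝ (k-j) * (descPochhammer ℝ j).comp (C (n:ℝ) - X))
        rw [hQdeg j hjk, (comp_deg_lc (n:ℝ) j (k-j)).2] at hcn
        exact hcn
      rw [hQc]
      have hone : ((-1:ℝ)^j) * ((-1:ℝ)^j) = 1 := by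
        rw [← mul_pow]; norm_num
      calc (k.choose j : ℝ) * (-1)^j / (μ^(k-j) * ((n:ℝ)-μ)^j) * (-1)^j
          = (k.choose j : ℝ) / (μ^(k-j) * ((n:ℝ)-μ)^j) * ((-1:ℝ)^j * (-1:ℝ)^j) := by ring
        _ = (k.choose j : ℝ) / (μ^(k-j) * ((n:ℝ)-μ)^j) := by rw [hone, mul_one]
    have hpos : 0 < p.coeff k := by
      rw [hcoeff]
      apply Finset.sum_pos
      · intro j hj
        simp only [Finset.mem_range] at hj
        have h1 : (0:ℝ) < (k.choose j : ℝ) := by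
          exact_mod_cast Nat.choose_pos (by omega : j ≤ k)
        have h2 : (0:ℝ) < μ^(k-j) * ((n:ℝ)-μ)^j := by positivity
        exact div_pos h1 h2
      · exact ⟨0, Finset.mem_range.mpr (by omega)⟩
    have hple : p.natDegree ≤ k := by
      rw [hp]
      refine natDegree_sum_le_of_forall_le _ _ fun j hj => ?_
      simp only [Finset.mem_range] at hj
      exact le_trans (natDegree_C_mul_le _ _) (hQdeg j (by omega)).le
    have hpne : p ≠ 0 := by
      intro h
      rw [h, coeff_zero] at hpos
      exact lt_irrefl 0 hpos
    have hnat : p.natDegree = k := le_antisymm hple (le_natDegree_of_ne_zero hpos.ne')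
    refine ⟨p, by rw [degree_eq_natDegree hpne, hnat], ?_⟩
    intro x hx
    rw [hIter x hx]
    have hfx : f x μ = ((n.choose x : ℝ)/(n:ℝ)^n) * (μ^x * (((n:ℝ)-μ)^(n-x))) := by
      have := congrFun (hfP x hx) μ
      rw [this]
      simp [binomP, eval_mul, eval_C, eval_pow, eval_X, eval_sub]
    have hpe : p.eval (x:ℝ) = ∑ j ∈ range (k+1),
        (k.choose j : ℝ) * (-1)^j / (μ^(k-j) * ((n:ℝ)-μ)^j)
          * ((x.descFactorial (k-j) : ℝ) * ((n-x).descFactorial j : ℝ)) := by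
      rw [hp, eval_finset_sum]
      refine Finset.sum_congr rfl fun j hj => ?_
      rw [eval_mul, eval_C, eval_mul, eval_comp, eval_sub, eval_C, eval_X]
      rw [descPochhammer_eval_eq_descFactorial]
      have : (n:ℝ) - (x:ℝ) = ((n - x : ℕ) : ℝ) := by
        rw [Nat.cast_sub hx]
      rw [this, descPochhammer_eval_eq_descFactorial]
    rw [binomP, iterate_derivative_C_mul, iterate_derivative_mul, eval_mul, eval_C,
      eval_finset_sum, hfx, hpe, Finset.mul_sum, Finset.mul_sum]
    refine Finset.sum_congr rfl fun j hj => ?_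
    rw [nsmul_eq_mul, eval_mul, eval_natCast, eval_mul,
      iterate_derivative_X_pow_eq_C_mul, iterate_derivative_sub_pow',
      eval_mul, eval_C, eval_pow, eval_X, eval_mul, eval_mul, eval_pow, eval_neg, eval_one,
      eval_C, eval_pow, eval_sub, eval_C, eval_X]
    have e1 := pow_descFac_helper μ hμne x (k-j)
    have e2 := pow_descFac_helper ((n:ℝ)-μ) hnμne (n-x) j
    calc ((n.choose x : ℝ)/(n:ℝ)^n) * ((k.choose j : ℝ) *
            ((x.descFactorial (k-j) : ℝ) * μ^(x-(k-j)) *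
             ((-1)^j * ((n-x).descFactorial j : ℝ) * ((n:ℝ)-μ)^((n-x)-j))))
        = ((n.choose x : ℝ)/(n:ℝ)^n) * (k.choose j : ℝ) * (-1)^j *
            (((x.descFactorial (k-j) : ℝ)) * μ^(x-(k-j))) *
            (((n-x).descFactorial j : ℝ) * ((n:ℝ)-μ)^((n-x)-j)) := by ring
      _ = ((n.choose x : ℝ)/(n:ℝ)^n) * (k.choose j : ℝ) * (-1)^j *
            ((x.descFactorial (k-j) : ℝ) * (μ^x * (μ^(k-j))⁻¹)) *
            (((n-x).descFactorial j : ℝ) * (((n:ℝ)-μ)^(n-x) * ((((n:ℝ)-μ)^j)⁻¹))) := by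
          rw [e1, e2]
      _ = ((n.choose x : ℝ)/(n:ℝ)^n) * (μ^x * ((n:ℝ)-μ)^(n-x)) *
            ((k.choose j : ℝ) * (-1)^j / (μ^(k-j) * ((n:ℝ)-μ)^j)
              * ((x.descFactorial (k-j) : ℝ) * ((n-x).descFactorial j : ℝ))) := by
          field_simp
  · -- part 2
    intro i hi
    have hsum : ∑ x ∈ Finset.range (n + 1), (x : ℝ)^i * iteratedDeriv k (fun m => f x m) μ
        = (derivative^[k] (∑ x ∈ range (n+1), C (((X:ℝ[X])^i).eval (x:ℝ)) * binomP n x)).eval μ := by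
      rw [Polynomial.iterate_derivative_sum, eval_finset_sum]
      refine Finset.sum_congr rfl fun x hx => ?_
      simp only [Finset.mem_range] at hx
      rw [hIter x (by omega), iterate_derivative_C_mul, eval_mul, eval_C, eval_pow, eval_X]
    rw [hsum, Polynomial.iterate_derivative_eq_zero, eval_zero]
    calc (∑ x ∈ range (n+1), C (((X:ℝ[X])^i).eval (x:ℝ)) * binomP n x).natDegree
        ≤ i := deg_claim n hn i (by omega) _ (natDegree_X_pow i).le
      _ < k := hi
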